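/- (Lemma A.2) Fix ρ > 0. For any scoring functions f, f' ∈ F and any distribution D over X × Y, MCSD^ρ_{D_x}(f, f') ≤ E^ρ_D(f) + E^ρ_D(f'), where MCSD^ρ_{D_x}(f, f') = (1/K)·E_{x∼D_x} ‖M^ρ(f(x)) − M^ρ(f'(x))‖_1 and E^ρ_D(g) = E_{(x,y)∼D} ∑_{k=1}^K Φ_ρ(μ_k(g(x), y)). -/

import Mathlib

open MeasureTheory Finset

/-- The ramp loss with margin `ρ`. -/
noncomputable def ramp (ρ x : ℝ) : ℝ :=
  if ρ ≤ x then 0 else if x ≤ 0 then 1 else 1 - x / ρ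

/-- The absolute margin function: `margin w y k = w k` if `k = y`, else `-w k`. -/
def margin {K : ℕ} (w : Fin K → ℝ) (y k : Fin K) : ℝ :=
  if k = y then w k else -w k

/-- Entrywise L1 distance between the matrices of absolute margin violations
`M^ρ(u)` and `M^ρ(v)`, where `M^ρ_{i,j}(w) = Φ_ρ(μ_i(w,j))`. -/
noncomputable def l1diff (ρ : ℝ) {K : ℕ} (u v : Fin K → ℝ) : ℝ :=
  ∑ i : Fin K, ∑ j : Fin K, |ramp ρ (margin u j i) - ramp ρ (margin v j i)|

/-- The margin-based multi-class loss `L^ρ(w, y) = ∑_k Φ_ρ(μ_k(w,y))`. -/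
noncomputable def Lmargin (ρ : ℝ) {K : ℕ} (w : Fin K → ℝ) (y : Fin K) : ℝ :=
  ∑ k : Fin K, ramp ρ (margin w y k)

lemma ramp_nonneg {ρ : ℝ} (hρ : 0 < ρ) (x : ℝ) : 0 ≤ ramp ρ x := by
  unfold ramp
  split_ifs with h1 h2
  · norm_num
  · norm_num
  · push_neg at h1 h2
    have : x / ρ < 1 := (div_lt_one hρ).mpr h1
    linarith

lemma ramp_le_one {ρ : ℝ} (hρ : 0 < ρ) (x : ℝ) : ramp ρ x ≤ 1 := by
  unfold ramp
  split_ifs with h1 h2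
  · norm_num
  · norm_num
  · push_neg at h2
    have : 0 ≤ x / ρ := le_of_lt (div_pos h2 hρ)
    linarith

lemma ramp_add_neg {ρ : ℝ} (hρ : 0 < ρ) (x : ℝ) : 1 ≤ ramp ρ x + ramp ρ (-x) := by
  unfold ramp
  split_ifs with h1 h2 h3 h4 h5 h6 h7 <;> (try push_neg at *) <;>
    first
      | linarith
      | (have hx : -x / ρ < 1 := (div_lt_one hρ).mpr (by linarith); linarith)
      | (have hx : x / ρ < 1 := (div_lt_one hρ).mpr (by linarith); linarith)

lemma key1 {ρ : ℝ} (hρ : 0 < ρ) (a b : ℝ) :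
    |ramp ρ a - ramp ρ b| ≤ ramp ρ a + ramp ρ b := by
  rw [abs_sub_le_iff]
  constructor <;> [linarith [ramp_nonneg hρ b]; linarith [ramp_nonneg hρ a]]

lemma key2 {ρ : ℝ} (hρ : 0 < ρ) (a b : ℝ) :
    |ramp ρ a - ramp ρ b| ≤ ramp ρ (-a) + ramp ρ (-b) := by
  rw [abs_sub_le_iff]
  constructor
  · linarith [ramp_le_one hρ a, ramp_add_neg hρ b, ramp_nonneg hρ (-a)]
  · linarith [ramp_le_one hρ b, ramp_add_neg hρ a, ramp_nonneg hρ (-b)]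

lemma key2' {ρ : ℝ} (hρ : 0 < ρ) (a b : ℝ) :
    |ramp ρ (-a) - ramp ρ (-b)| ≤ ramp ρ a + ramp ρ b := by
  simpa using key2 hρ (-a) (-b)

lemma l1diff_le {ρ : ℝ} (hρ : 0 < ρ) {K : ℕ} (u v : Fin K → ℝ) (y : Fin K) :
    l1diff ρ u v ≤ (K : ℝ) * (Lmargin ρ u y + Lmargin ρ v y) := by
  have key : ∀ i j : Fin K,
      |ramp ρ (margin u j i) - ramp ρ (margin v j i)| ≤
        ramp ρ (margin u y i) + ramp ρ (margin v y i) := by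
    intro i j
    simp only [margin]
    by_cases hij : i = j <;> by_cases hiy : i = y
    · simp only [if_pos hij, if_pos hiy]; exact key1 hρ _ _
    · simp only [if_pos hij, if_neg hiy]; exact key2 hρ _ _
    · simp only [if_neg hij, if_pos hiy]; exact key2' hρ _ _
    · simp only [if_neg hij, if_neg hiy]; exact key1 hρ _ _
  calc l1diff ρ u v
      ≤ ∑ i : Fin K, ∑ _j : Fin K,
          (ramp ρ (margin u y i) + ramp ρ (margin v y i)) := by
        refine Finset.sum_le_sum fun i _ => Finset.sum_le_sum fun j _ => key i j
    _ = (K : ℝ) * (Lmargin ρ u y + Lmargin ρ v y) := by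
        simp only [Finset.sum_const, Finset.card_univ, Fintype.card_fin, nsmul_eq_mul]
        rw [← Finset.mul_sum, Finset.sum_add_distrib]
        rfl

theorem lemmaA2 {X : Type*} [MeasurableSpace X] {K : ℕ} (hK : 2 ≤ K)
    (ρ : ℝ) (hρ : 0 < ρ)
    (D : Measure (X × Fin K)) (hD : IsProbabilityMeasure D)
    (f f' : X → Fin K → ℝ)
    (hfsum : ∀ x, ∑ k : Fin K, f x k = 0) (hf'sum : ∀ x, ∑ k : Fin K, f' x k = 0)
    (h1 : Integrable (fun p : X × Fin K => l1diff ρ (f p.1) (f' p.1)) D)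
    (h2 : Integrable (fun p : X × Fin K => Lmargin ρ (f p.1) p.2) D)
    (h3 : Integrable (fun p : X × Fin K => Lmargin ρ (f' p.1) p.2) D) :
    (1 / (K : ℝ)) * (∫ p, l1diff ρ (f p.1) (f' p.1) ∂D) ≤
      (∫ p, Lmargin ρ (f p.1) p.2 ∂D) + ∫ p, Lmargin ρ (f' p.1) p.2 ∂D := by
  have hKpos : (0:ℝ) < K := by exact_mod_cast lt_of_lt_of_le two_pos hK
  have hpt : ∀ p : X × Fin K, l1diff ρ (f p.1) (f' p.1) ≤
      (K : ℝ) * (Lmargin ρ (f p.1) p.2 + Lmargin ρ (f' p.1) p.2) :=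
    fun p => l1diff_le hρ _ _ p.2
  have hint : Integrable
      (fun p : X × Fin K => (K : ℝ) * (Lmargin ρ (f p.1) p.2 + Lmargin ρ (f' p.1) p.2)) D :=
    (h2.add h3).const_mul _
  have h := integral_mono h1 hint hpt
  rw [integral_const_mul, integral_add h2 h3] at h
  calc (1 / (K : ℝ)) * (∫ p, l1diff ρ (f p.1) (f' p.1) ∂D)
      ≤ (1 / (K : ℝ)) * ((K : ℝ) * ((∫ p, Lmargin ρ (f p.1) p.2 ∂D) +
          ∫ p, Lmargin ρ (f' p.1) p.2 ∂D)) := by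
        apply mul_le_mul_of_nonneg_left h (by positivity)
    _ = (∫ p, Lmargin ρ (f p.1) p.2 ∂D) + ∫ p, Lmargin ρ (f' p.1) p.2 ∂D := by
        field_simp
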